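/- Proposition 3 (ordering of spectral reconstruction errors): let g_c > 0, σ² > 0, and 0 < E ≤ x̄₁ ≤ x̄₂. Writing S(t) = (t·g_c − 1)²·E + t²·σ² and ḡ_j = g_c·x̄_j/(g_c²·x̄_j + σ²) for j = 1, 2, one has S(ḡ₁) ≤ S(ḡ₂) ≤ S(1/g_c). -/

import Mathlib

/-- Proposition 3, ordering of spectral reconstruction errors: let
`g_c > 0`, `σ² > 0`, and `0 < E ≤ x̄₁ ≤ x̄₂`.  Writing `S(t) = (t g_c − 1)² E + t² σ²` and
`ḡ_j = g_c x̄_j / (g_c² x̄_j + σ²)`, one has `S(ḡ₁) ≤ S(ḡ₂) ≤ S(1/g_c)`. -/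
theorem modified_wiener_spectral_error_ordering
    (gc σ2 E xbar1 xbar2 : ℝ) (hgc : 0 < gc) (hσ2 : 0 < σ2)
    (hE : 0 < E) (h1 : E ≤ xbar1) (h2 : xbar1 ≤ xbar2)
    (S : ℝ → ℝ) (hS : ∀ t, S t = (t * gc - 1) ^ 2 * E + t ^ 2 * σ2)
    (g1 g2 : ℝ)
    (hg1 : g1 = gc * xbar1 / (gc ^ 2 * xbar1 + σ2))
    (hg2 : g2 = gc * xbar2 / (gc ^ 2 * xbar2 + σ2)) :
    S g1 ≤ S g2 ∧ S g2 ≤ S (1 / gc) := by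
  have hx1 : 0 < xbar1 := lt_of_lt_of_le hE h1
  have hx2 : 0 < xbar2 := lt_of_lt_of_le hx1 h2
  have hD1 : 0 < gc ^ 2 * xbar1 + σ2 := by positivity
  have hD2 : 0 < gc ^ 2 * xbar2 + σ2 := by positivity
  have e1 : g1 * (gc ^ 2 * xbar1 + σ2) = gc * xbar1 := by
    rw [hg1]; field_simp
  have e2 : g2 * (gc ^ 2 * xbar2 + σ2) = gc * xbar2 := by
    rw [hg2]; field_simp
  -- a1 = A*g1 - gc*E ≥ 0, a2 = A*g2 - gc*E ≥ 0 where A = gc²E+σ2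
  have ha1' : ((gc ^ 2 * E + σ2) * g1 - gc * E) * (gc ^ 2 * xbar1 + σ2)
      = gc * σ2 * (xbar1 - E) := by linear_combination (gc ^ 2 * E + σ2) * e1
  have ha2' : ((gc ^ 2 * E + σ2) * g2 - gc * E) * (gc ^ 2 * xbar2 + σ2)
      = gc * σ2 * (xbar2 - E) := by linear_combination (gc ^ 2 * E + σ2) * e2
  have ha1 : 0 ≤ (gc ^ 2 * E + σ2) * g1 - gc * E := by
    nlinarith [mul_nonneg (mul_nonneg hgc.le hσ2.le) (by linarith : (0:ℝ) ≤ xbar1 - E)]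
  have ha2 : 0 ≤ (gc ^ 2 * E + σ2) * g2 - gc * E := by
    nlinarith [mul_nonneg (mul_nonneg hgc.le hσ2.le) (by linarith : (0:ℝ) ≤ xbar2 - E)]
  -- g1 ≤ g2
  have h21 : (g2 - g1) * ((gc ^ 2 * xbar1 + σ2) * (gc ^ 2 * xbar2 + σ2))
      = gc * σ2 * (xbar2 - xbar1) := by
    linear_combination (gc ^ 2 * xbar1 + σ2) * e2 - (gc ^ 2 * xbar2 + σ2) * e1
  have hg12 : g1 ≤ g2 := by
    nlinarith [mul_pos hD1 hD2,
      mul_nonneg (mul_nonneg hgc.le hσ2.le) (by linarith : (0:ℝ) ≤ xbar2 - xbar1)]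
  constructor
  · rw [hS, hS]
    nlinarith [mul_nonneg (by linarith : (0:ℝ) ≤ g2 - g1)
      (by linarith : (0:ℝ) ≤ ((gc ^ 2 * E + σ2) * g1 - gc * E)
        + ((gc ^ 2 * E + σ2) * g2 - gc * E))]
  · have hS2 : S (1 / gc) = σ2 / gc ^ 2 := by
      rw [hS]; field_simp; ring
    rw [hS, hS2, le_div_iff₀ (by positivity : (0:ℝ) < gc ^ 2)]
    -- u = 1 - gc*g2 ≥ 0 with u*D2 = σ2
    have heu : (1 - gc * g2) * (gc ^ 2 * xbar2 + σ2) = σ2 := by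
      linear_combination (-gc) * e2
    have hu : 0 ≤ 1 - gc * g2 := by nlinarith [hσ2, hD2]
    -- w = σ2(1+gc g2) - gc²E(1-gc g2) ≥ 0
    have hw' : (σ2 * (1 + gc * g2) - gc ^ 2 * E * (1 - gc * g2)) * (gc ^ 2 * xbar2 + σ2)
        = σ2 * (gc ^ 2 * (2 * xbar2 - E) + σ2) := by
      linear_combination σ2 * gc * e2 - gc ^ 2 * E * heu
    have hr : 0 < (σ2 * (1 + gc * g2) - gc ^ 2 * E * (1 - gc * g2)) * (gc ^ 2 * xbar2 + σ2) := by
      rw [hw']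
      have : (0:ℝ) < 2 * xbar2 - E := by linarith
      positivity
    have hw : 0 ≤ σ2 * (1 + gc * g2) - gc ^ 2 * E * (1 - gc * g2) := by
      rcases mul_pos_iff.mp hr with ⟨h, _⟩ | ⟨_, h⟩
      · exact h.le
      · linarith
    have hid : σ2 - ((g2 * gc - 1) ^ 2 * E + g2 ^ 2 * σ2) * gc ^ 2
        = (1 - gc * g2) * (σ2 * (1 + gc * g2) - gc ^ 2 * E * (1 - gc * g2)) := by ring
    linarith [mul_nonneg hu hw]
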